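/- Let $q$ be a prime power, let $S \subseteq \mathbb{F}_{q^2}^*$ be a union of cosets of $\mathbb{F}_q^*$ with $\mathbb{F}_q^* \subseteq S$, and let $v \in \mathbb{F}_{q^2}^* \setminus S$. Suppose $A \subseteq \mathbb{F}_{q^2}$ satisfies $A - A \subseteq S \cup \{0\}$ and $|A| = q$. Then, writing each element of $\mathbb{F}_{q^2}$ uniquely as $a + bv$ with $a, b \in \mathbb{F}_q$, the set $A$ is the graph of a function: there exists $f : \mathbb{F}_q \to \mathbb{F}_q$ such that $A = \{x + f(x) v : x \in \mathbb{F}_q\}$. -/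
import Mathlib

open scoped Classical
open Polynomial Finset

lemma cardK_aux (p n q : ℕ) (hp : p.Prime) (hn : 1 ≤ n) (hq : q = p ^ n)
    (F : Type*) [Field F] [Fintype F] (hF : Fintype.card F = q ^ 2) :
    (Finset.univ.filter (fun x : F => x ^ q = x)).card = q := by
  classical
  have hq2 : 2 ≤ q := by
    rw [hq]; calc 2 ≤ p := hp.two_le
    _ ≤ p ^ n := Nat.le_self_pow (by omega) p
  set K := Finset.univ.filter (fun x : F => x ^ q = x) with hK
  have hub : K.card ≤ q := by
    have hne : (X ^ q - X : F[X]) ≠ 0 :=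
      FiniteField.X_pow_card_sub_X_ne_zero F (by omega)
    have hsub : K ⊆ (X ^ q - X : F[X]).roots.toFinset := by
      intro x hx
      rw [hK, mem_filter] at hx
      rw [Multiset.mem_toFinset, mem_roots hne]
      simp [sub_eq_zero, hx.2]
    calc K.card ≤ _ := Finset.card_le_card hsub
      _ ≤ (X ^ q - X : F[X]).roots.card := Multiset.toFinset_card_le _
      _ ≤ (X ^ q - X : F[X]).natDegree := Polynomial.card_roots' _
      _ = q := FiniteField.X_pow_card_sub_X_natDegree_eq F (by omega)
  have hcardu : Fintype.card Fˣ = q ^ 2 - 1 := by rw [Fintype.card_units, hF]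
  obtain ⟨g, hg⟩ := IsCyclic.exists_generator (α := Fˣ)
  have hog : orderOf g = q ^ 2 - 1 := by
    rw [orderOf_eq_card_of_forall_mem_zpowers hg, Nat.card_eq_fintype_card, hcardu]
  have hkey : (q + 1) * (q - 1) = q ^ 2 - 1 := by
    cases q with
    | zero => simp
    | succ m =>
      have h1 : (m + 1) ^ 2 = (m + 1 + 1) * m + 1 := by ring
      rw [Nat.add_sub_cancel]; omega
  have hdvd : q + 1 ∣ q ^ 2 - 1 := ⟨q - 1, hkey.symm⟩
  set h := g ^ (q + 1) with hh
  have hoh : orderOf h = q - 1 := by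
    rw [hh, orderOf_pow, hog, Nat.gcd_eq_right hdvd]
    rw [← hkey, Nat.mul_div_cancel_left _ (by omega)]
  have hone : h ^ (q - 1) = 1 := by rw [← hoh]; exact pow_orderOf_eq_one h
  have hroot : ∀ i : ℕ, ((h ^ i : Fˣ) : F) ^ q = ((h ^ i : Fˣ) : F) := by
    intro i
    have : (h ^ i) ^ q = h ^ i := by
      calc (h ^ i) ^ q = (h ^ i) ^ (q - 1 + 1) := by congr 1; omega
        _ = ((h ^ (q-1)) ^ i) * h ^ i := by
            rw [pow_succ]; congr 1; exact pow_right_comm h i (q-1)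
        _ = h ^ i := by rw [hone, one_pow, one_mul]
    calc ((h ^ i : Fˣ) : F) ^ q = (((h ^ i) ^ q : Fˣ) : F) := by push_cast; ring
      _ = _ := by rw [this]
  have hlb : q ≤ K.card := by
    have hsub : insert (0 : F) ((Finset.range (q-1)).image (fun i => ((h ^ i : Fˣ) : F))) ⊆ K := by
      intro x hx
      rw [Finset.mem_insert] at hx
      rw [hK, mem_filter]
      refine ⟨Finset.mem_univ _, ?_⟩
      rcases hx with rfl | hx
      · exact zero_pow (by omega)
      · obtain ⟨i, _, rfl⟩ := Finset.mem_image.mp hx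
        exact hroot i
    have hni : (0 : F) ∉ (Finset.range (q-1)).image (fun i => ((h ^ i : Fˣ) : F)) := by
      simp only [Finset.mem_image, not_exists]
      rintro i ⟨-, hi⟩
      exact Units.ne_zero _ hi
    have hinj : Set.InjOn (fun i => ((h ^ i : Fˣ) : F)) (Finset.range (q-1)) := by
      intro i hi j hj hij
      have : h ^ i = h ^ j := Units.ext hij
      exact pow_injOn_Iio_orderOf (by simpa [hoh] using Finset.mem_range.mp hi)
        (by simpa [hoh] using Finset.mem_range.mp hj) this
    calc q = (q - 1) + 1 := by omega
      _ = (insert (0 : F) ((Finset.range (q-1)).image (fun i => ((h ^ i : Fˣ) : F)))).card := by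
          rw [Finset.card_insert_of_notMem hni, Finset.card_image_of_injOn hinj,
            Finset.card_range]
      _ ≤ K.card := Finset.card_le_card hsub
  omega

theorem stmt11 (p n q : ℕ) (hp : p.Prime) (hn : 1 ≤ n) (hq : q = p ^ n)
    (F : Type*) [Field F] [Fintype F] (hF : Fintype.card F = q ^ 2)
    (S : Set F) (hS0 : (0 : F) ∉ S)
    (hScoset : ∀ s ∈ S, ∀ c : F, c ≠ 0 → c ^ q = c → s * c ∈ S)
    (hSq : ∀ x : F, x ≠ 0 → x ^ q = x → x ∈ S)
    (v : F) (hv0 : v ≠ 0) (hvS : v ∉ S)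
    (A : Set F) (hA : ∀ a ∈ A, ∀ b ∈ A, a - b ∈ S ∪ {0})
    (hAcard : A.ncard = q) :
    ∃ f : F → F, (∀ x : F, x ^ q = x → (f x) ^ q = f x) ∧
      A = {y : F | ∃ x : F, x ^ q = x ∧ y = x + f x * v} := by
  classical
  -- characteristic
  obtain ⟨p', hcp'⟩ := CharP.exists F
  haveI := hcp'
  have hp' : p'.Prime := CharP.char_is_prime F p'
  obtain ⟨m, _, hm2⟩ := FiniteField.card F p'
  have hpp' : p = p' := by
    have h1 : p ∣ p' ^ (m : ℕ) := by
      rw [← hm2, hF, hq]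
      exact dvd_pow (dvd_pow_self p (by omega)) (by omega)
    exact (Nat.prime_dvd_prime_iff_eq hp hp').mp (hp.dvd_of_dvd_pow h1)
  haveI : CharP F p := hpp' ▸ hcp'
  haveI : Fact p.Prime := ⟨hp⟩
  subst hq
  set q := p ^ n with hq
  have hq2 : 2 ≤ q := by
    calc 2 ≤ p := hp.two_le
    _ ≤ p ^ n := Nat.le_self_pow (by omega) p
  have hsubK : ∀ x y : F, x ^ q = x → y ^ q = y → (x - y) ^ q = x - y := by
    intro x y hx hy
    rw [hq, sub_pow_char_pow, ← hq, hx, hy]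
  -- the subfield as a finset
  set K := Finset.univ.filter (fun x : F => x ^ q = x) with hK
  have hKcard : K.card = q := cardK_aux p n q hp hn rfl F hF
  have hmemK : ∀ x : F, x ∈ K ↔ x ^ q = x := by intro x; simp [hK]
  have hvq : ¬ (v ^ q = v) := fun h => hvS (hSq v hv0 h)
  -- uniqueness of representation
  have huniq : ∀ x c x' c' : F, x ^ q = x → c ^ q = c → x' ^ q = x' → c' ^ q = c' →
      x + c * v = x' + c' * v → x = x' ∧ c = c' := by
    intro x c x' c' hx hc hx' hc' heq
    by_cases hcc : c = c'
    · subst hcc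
      exact ⟨by linear_combination heq, rfl⟩
    · exfalso
      apply hvq
      have hv' : v = (x - x') / (c' - c) := by
        rw [eq_div_iff (sub_ne_zero.mpr (Ne.symm hcc))]
        linear_combination -heq
      rw [hv', div_pow, hsubK x x' hx hx', hsubK c' c hc' hc]
  -- existence of representation
  have hrep : ∀ y : F, ∃ x c : F, x ^ q = x ∧ c ^ q = c ∧ y = x + c * v := by
    have hinj : Set.InjOn (fun z : F × F => z.1 + z.2 * v) (K ×ˢ K) := by
      intro a ha b hb hab
      simp only [Finset.coe_product, Set.mem_prod, Finset.mem_coe, hmemK] at ha hb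
      obtain ⟨h1, h2⟩ := huniq a.1 a.2 b.1 b.2 ha.1 ha.2 hb.1 hb.2 hab
      exact Prod.ext h1 h2
    have hcard : ((K ×ˢ K).image (fun z : F × F => z.1 + z.2 * v)).card = Fintype.card F := by
      rw [Finset.card_image_of_injOn (by simpa using hinj), Finset.card_product, hKcard, hF]
      ring
    have huniv := Finset.eq_univ_of_card _ hcard
    intro y
    have hy : y ∈ (K ×ˢ K).image (fun z : F × F => z.1 + z.2 * v) := by
      rw [huniv]; exact Finset.mem_univ y
    obtain ⟨z, hz, hzy⟩ := Finset.mem_image.mp hy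
    rw [Finset.mem_product, hmemK, hmemK] at hz
    exact ⟨z.1, z.2, hz.1, hz.2, hzy.symm⟩
  let xp : F → F := fun y => (hrep y).choose
  let cp : F → F := fun y => (hrep y).choose_spec.choose
  have hxp : ∀ y, (xp y) ^ q = xp y := fun y => (hrep y).choose_spec.choose_spec.1
  have hcp : ∀ y, (cp y) ^ q = cp y := fun y => (hrep y).choose_spec.choose_spec.2.1
  have hdecomp : ∀ y, y = xp y + cp y * v := fun y => (hrep y).choose_spec.choose_spec.2.2
  -- first-coordinate injectivity on A
  have hxpinj : ∀ a ∈ A, ∀ b ∈ A, xp a = xp b → a = b := by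
    intro a ha b hb hxab
    by_contra hne
    have hsubS : a - b ∈ S := by
      rcases hA a ha b hb with h | h
      · exact h
      · exact absurd (sub_eq_zero.mp h) hne
    have hab : a - b = (cp a - cp b) * v := by
      calc a - b = (xp a + cp a * v) - (xp b + cp b * v) := by rw [← hdecomp a, ← hdecomp b]
        _ = (cp a - cp b) * v := by rw [hxab]; ring
    set c := cp a - cp b with hc
    have hc0 : c ≠ 0 := by
      intro h
      apply hne
      have : a - b = 0 := by rw [hab, h, zero_mul]
      exact sub_eq_zero.mp this
    have hcq : c ^ q = c := hsubK _ _ (hcp a) (hcp b)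
    have hcinv : (c⁻¹) ^ q = c⁻¹ := by rw [inv_pow, hcq]
    have hmem := hScoset (a - b) hsubS c⁻¹ (inv_ne_zero hc0) hcinv
    rw [hab] at hmem
    have hv' : c * v * c⁻¹ = v := by field_simp
    rw [hv'] at hmem
    exact hvS hmem
  -- surjectivity onto K
  have hsurj : ∀ x : F, x ^ q = x → ∃ a, a ∈ A ∧ xp a = x := by
    have hA'c : A.toFinset.card = q := by rw [← Set.ncard_eq_toFinset_card']; exact hAcard
    have himg : A.toFinset.image xp = K := by
      apply Finset.eq_of_subset_of_card_le
      · intro x hx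
        obtain ⟨a, _, rfl⟩ := Finset.mem_image.mp hx
        rw [hmemK]; exact hxp a
      · rw [Finset.card_image_of_injOn (fun a ha b hb hab =>
          hxpinj a (Set.mem_toFinset.mp ha) b (Set.mem_toFinset.mp hb) hab), hA'c, hKcard]
    intro x hx
    have hxm : x ∈ A.toFinset.image xp := by rw [himg, hmemK]; exact hx
    obtain ⟨a, ha, haa⟩ := Finset.mem_image.mp hxm
    exact ⟨a, Set.mem_toFinset.mp ha, haa⟩
  refine ⟨fun x => if hx : x ^ q = x then cp (hsurj x hx).choose else 0, fun x hx => ?_, ?_⟩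
  · simp only [dif_pos hx]
    exact hcp _
  · ext y
    simp only [Set.mem_setOf_eq]
    constructor
    · intro hy
      refine ⟨xp y, hxp y, ?_⟩
      simp only [dif_pos (hxp y)]
      obtain ⟨haA, hax⟩ := (hsurj (xp y) (hxp y)).choose_spec
      have : (hsurj (xp y) (hxp y)).choose = y := hxpinj _ haA _ hy hax
      rw [this]
      exact hdecomp y
    · rintro ⟨x, hx, rfl⟩
      simp only [dif_pos hx]
      obtain ⟨haA, hax⟩ := (hsurj x hx).choose_spec
      have := hdecomp (hsurj x hx).choose
      rw [hax] at this
      rw [← this]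
      exact haA
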